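/- The set S_α^m = {z ∈ ℂ^m : |arg z_j| ≤ α₀ ∀j, ∑_j z_j = 1} is a convex polytope: it equals the convex hull of the m² points consisting of the m standard basis vectors e^i together with the m² − m vectors η^{jk} (j ≠ k) having coordinate 1/2 + i·tan(α₀)/2 in position j, coordinate 1/2 − i·tan(α₀)/2 in position k, and 0 elsewhere. -/

import Mathlib

noncomputable def payoff {m n : ℕ} (A : Matrix (Fin m) (Fin n) ℂ)
    (z : Fin m → ℂ) (w : Fin n → ℂ) : ℝ :=
  (∑ i, ∑ j, (starRingEnd ℂ) (z i) * A i j * w j).re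

def Sarg (m : ℕ) (α : ℝ) : Set (Fin m → ℂ) :=
  {z | (∀ i, 0 ≤ (z i).re ∧ |(z i).im| ≤ Real.tan α * (z i).re) ∧ ∑ i, z i = 1}

/-- S_α^m is a convex polytope: it is the convex hull of the m standard basis vectors
together with the m² − m two-support vectors with entries 1/2 ± i·tan(α₀)/2. -/
theorem Sarg_eq_convexHull (m : ℕ) (hm : 2 ≤ m) (α₀ : ℝ)
    (hα : α₀ ∈ Set.Ioo 0 (Real.pi / 2)) :
    Sarg m α₀ = convexHull ℝ
      {d : Fin m → ℂ |
        (∃ i : Fin m, d = fun j => if j = i then (1 : ℂ) else 0) ∨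
        (∃ j k : Fin m, j ≠ k ∧ d = fun l =>
          if l = j then (⟨1/2, Real.tan α₀ / 2⟩ : ℂ)
          else if l = k then (⟨1/2, -(Real.tan α₀ / 2)⟩ : ℂ) else 0)} := by
  obtain ⟨hα0, hα1⟩ := hα
  have ht : 0 < Real.tan α₀ := Real.tan_pos_of_pos_of_lt_pi_div_two hα0 hα1
  set t := Real.tan α₀ with htdef
  apply Set.Subset.antisymm
  · intro z hz
    obtain ⟨hzc, hzs⟩ := hz
    have ht0 : t ≠ 0 := ne_of_gt ht
    set yp : Fin m → ℝ := fun j => max (z j).im 0 with hypdef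
    set yn : Fin m → ℝ := fun j => max (-(z j).im) 0 with hyndef
    set Y := ∑ j, yp j with hYdef
    have hypnn : ∀ j, 0 ≤ yp j := fun j => le_max_right _ _
    have hynnn : ∀ j, 0 ≤ yn j := fun j => le_max_right _ _
    have hppn : ∀ j, yp j * yn j = 0 := by
      intro j
      rcases le_total (z j).im 0 with h | h
      · simp [hypdef, max_eq_right h]
      · simp [hyndef, max_eq_right (neg_nonpos.mpr h)]
    have hsub : ∀ j, yp j - yn j = (z j).im := fun j =>
      max_zero_sub_max_neg_zero_eq_self _
    have habs : ∀ j, yp j + yn j = |(z j).im| := by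
      intro j
      rcases le_total 0 (z j).im with h | h
      · rw [abs_of_nonneg h]
        simp [hypdef, hyndef, max_eq_left h, max_eq_right (neg_nonpos.mpr h)]
      · rw [abs_of_nonpos h]
        simp [hypdef, hyndef, max_eq_right h, max_eq_left (neg_nonneg.mpr h)]
    have hsx : ∑ j, (z j).re = 1 := by
      have := congrArg Complex.re hzs
      simpa [Complex.re_sum] using this
    have hsy : ∑ j, (z j).im = 0 := by
      have := congrArg Complex.im hzs
      simpa [Complex.im_sum] using this
    have hYn : ∑ j, yn j = Y := by
      have h1 : ∑ j, (yp j - yn j) = 0 := by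
        rw [Finset.sum_congr rfl fun j _ => hsub j]; exact hsy
      rw [Finset.sum_sub_distrib] at h1
      linarith [hYdef.le, hYdef.ge]
    have hYnn : 0 ≤ Y := hYdef ▸ Finset.sum_nonneg fun j _ => hypnn j
    have hyp0 : ∀ l, Y = 0 → yp l = 0 := by
      intro l h0
      have := (Finset.sum_eq_zero_iff_of_nonneg (fun j _ => hypnn j)).mp (hYdef ▸ h0)
      exact this l (Finset.mem_univ l)
    have hyn0 : ∀ l, Y = 0 → yn l = 0 := by
      intro l h0
      have h1 : ∑ j, yn j = 0 := by rw [hYn, h0]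
      have := (Finset.sum_eq_zero_iff_of_nonneg (fun j _ => hynnn j)).mp h1
      exact this l (Finset.mem_univ l)
    set c : ℝ := 2 / (t * Y) with hcdef
    have hcnn : 0 ≤ c := div_nonneg (by norm_num) (mul_nonneg ht.le hYnn)
    have hmarg : ∀ u : ℝ, (Y = 0 → u = 0) → c * u * Y = 2 / t * u := by
      intro u hu
      rcases eq_or_ne Y 0 with h | h
      · simp [h, hu h]
      · rw [hcdef]
        field_simp
    set W : Fin m × Fin m → ℝ := fun p =>
      (if p.1 = p.2 then (z p.1).re - |(z p.1).im| / t else 0) + c * yp p.1 * yn p.2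
      with hWdef
    set P : Fin m × Fin m → (Fin m → ℂ) := fun p l =>
      if p.1 = p.2 then (if l = p.1 then 1 else 0)
      else if l = p.1 then (⟨1/2, t/2⟩ : ℂ)
        else if l = p.2 then (⟨1/2, -(t/2)⟩ : ℂ) else 0 with hPdef
    have hWnn : ∀ p : Fin m × Fin m, 0 ≤ W p := by
      intro p
      rw [hWdef]
      apply add_nonneg
      · by_cases h : p.1 = p.2
        · rw [if_pos h]
          have h2 := (hzc p.1).2
          rw [← htdef] at h2
          have h3 : |(z p.1).im| / t ≤ (z p.1).re := by
            rw [div_le_iff₀ ht]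
            linarith [h2]
          linarith
        · rw [if_neg h]
      · exact mul_nonneg (mul_nonneg hcnn (hypnn _)) (hynnn _)
    have hsumW : ∑ p : Fin m × Fin m, W p = 1 := by
      rw [Fintype.sum_prod_type]
      have hrow : ∀ j, ∑ k, W (j, k) = ((z j).re - |(z j).im| / t) + c * yp j * Y := by
        intro j
        simp only [hWdef]
        rw [Finset.sum_add_distrib]
        congr 1
        · simp [Finset.sum_ite_eq]
        · rw [← Finset.mul_sum, hYn]
      rw [Finset.sum_congr rfl fun j _ => hrow j]
      rw [Finset.sum_add_distrib, Finset.sum_sub_distrib, hsx, ← Finset.sum_div]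
      have h2Y : ∑ j, |(z j).im| = 2 * Y := by
        rw [Finset.sum_congr rfl fun j _ => (habs j).symm, Finset.sum_add_distrib, hYn]
        linarith [hYdef.le, hYdef.ge]
      have h3 : ∑ j, c * yp j * Y = c * Y * Y := by
        calc ∑ j, c * yp j * Y = ∑ j, (c * Y) * yp j :=
              Finset.sum_congr rfl fun j _ => by ring
          _ = (c * Y) * ∑ j, yp j := (Finset.mul_sum _ _ _).symm
          _ = c * Y * Y := by rw [← hYdef]
      have h4 : c * Y * Y = 2 / t * Y := hmarg Y (fun h => h)
      rw [h2Y, h3, h4]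
      have : 2 * Y / t = 2 / t * Y := by ring
      linarith [this]
    have hrec : ∑ p : Fin m × Fin m, W p • P p = z := by
      funext l
      rw [Finset.sum_apply]
      simp only [Pi.smul_apply]
      have hdecomp : ∀ p : Fin m × Fin m, W p • P p l =
          (if p.1 = p.2 then
            ((z p.1).re - |(z p.1).im| / t) • (if l = p.1 then (1:ℂ) else 0) else 0)
          + ((if l = p.1 then (c * yp p.1 * yn p.2) • (⟨1/2, t/2⟩ : ℂ) else 0)
          + (if l = p.2 then (c * yp p.1 * yn p.2) • (⟨1/2, -(t/2)⟩ : ℂ) else 0)) := by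
        rintro ⟨j, k⟩
        simp only [hWdef, hPdef]
        by_cases h1 : j = k
        · subst h1
          have h0 : c * yp j * yn j = 0 := by rw [mul_assoc, hppn j, mul_zero]
          by_cases h2 : l = j <;> simp [h0, h2]
        · by_cases h2 : l = j
          · have h3 : ¬ l = k := fun hc => h1 (h2 ▸ hc)
            simp [h1, h2, h3]
          · have h4 : ¬ k = j := fun hc => h1 hc.symm
            by_cases h3 : l = k <;> simp [h1, h2, h3, h4]
      rw [Finset.sum_congr rfl fun p _ => hdecomp p,
        Finset.sum_add_distrib, Finset.sum_add_distrib]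
      have hS1 : ∑ p : Fin m × Fin m, (if p.1 = p.2 then
          ((z p.1).re - |(z p.1).im| / t) • (if l = p.1 then (1:ℂ) else 0) else 0)
          = ((z l).re - |(z l).im| / t) • (1:ℂ) := by
        rw [Fintype.sum_prod_type]
        have e1 : ∀ j : Fin m, (∑ k, if (j, k).1 = (j, k).2 then
            ((z (j, k).1).re - |(z (j, k).1).im| / t) • (if l = (j, k).1 then (1:ℂ) else 0) else 0)
            = ((z j).re - |(z j).im| / t) • (if l = j then (1:ℂ) else 0) := by
          intro j
          simp [Finset.sum_ite_eq]
        rw [Finset.sum_congr rfl fun j _ => e1 j]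
        have e2 : ∀ j : Fin m, ((z j).re - |(z j).im| / t) • (if l = j then (1:ℂ) else 0)
            = (if l = j then ((z j).re - |(z j).im| / t) • (1:ℂ) else 0) := by
          intro j
          by_cases h : l = j <;> simp [h]
        rw [Finset.sum_congr rfl fun j _ => e2 j, Finset.sum_ite_eq]
        simp
      have hS2 : ∑ p : Fin m × Fin m,
          (if l = p.1 then (c * yp p.1 * yn p.2) • (⟨1/2, t/2⟩ : ℂ) else 0)
          = (2 / t * yp l) • (⟨1/2, t/2⟩ : ℂ) := by
        rw [Fintype.sum_prod_type]
        have e1 : ∀ j : Fin m, (∑ k, if l = (j, k).1 then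
            (c * yp (j, k).1 * yn (j, k).2) • (⟨1/2, t/2⟩ : ℂ) else 0)
            = (if l = j then (∑ k, (c * yp j * yn k)) • (⟨1/2, t/2⟩ : ℂ) else 0) := by
          intro j
          by_cases h : l = j <;> simp [h, Finset.sum_smul]
        rw [Finset.sum_congr rfl fun j _ => e1 j, Finset.sum_ite_eq]
        have e2 : ∑ k, c * yp l * yn k = 2 / t * yp l := by
          rw [← Finset.mul_sum, hYn]
          exact hmarg (yp l) (hyp0 l)
        simp [e2]
      have hS3 : ∑ p : Fin m × Fin m,
          (if l = p.2 then (c * yp p.1 * yn p.2) • (⟨1/2, -(t/2)⟩ : ℂ) else 0)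
          = (2 / t * yn l) • (⟨1/2, -(t/2)⟩ : ℂ) := by
        rw [Fintype.sum_prod_type_right]
        have e1 : ∀ k : Fin m, (∑ j, if l = (j, k).2 then
            (c * yp (j, k).1 * yn (j, k).2) • (⟨1/2, -(t/2)⟩ : ℂ) else 0)
            = (if l = k then (∑ j, (c * yp j * yn k)) • (⟨1/2, -(t/2)⟩ : ℂ) else 0) := by
          intro k
          by_cases h : l = k <;> simp [h, Finset.sum_smul]
        rw [Finset.sum_congr rfl fun k _ => e1 k, Finset.sum_ite_eq]
        have e2 : ∑ j, c * yp j * yn l = 2 / t * yn l := by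
          have e3 : ∑ j, c * yp j * yn l = c * Y * yn l := by
            calc ∑ j, c * yp j * yn l = ∑ j, (c * yn l) * yp j :=
                  Finset.sum_congr rfl fun j _ => by ring
              _ = (c * yn l) * ∑ j, yp j := (Finset.mul_sum _ _ _).symm
              _ = c * Y * yn l := by rw [← hYdef]; ring
          have e4 : c * yn l * Y = 2 / t * yn l := hmarg (yn l) (hyn0 l)
          rw [e3]
          linarith [e4, (by ring : c * Y * yn l = c * yn l * Y)]
        simp [e2]
      rw [hS1, hS2, hS3]
      have h1 := habs l
      have h2 := hsub l
      apply Complex.ext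
      · simp only [Complex.add_re, Complex.real_smul, Complex.mul_re,
          Complex.ofReal_re, Complex.ofReal_im, Complex.one_re, Complex.one_im]
        rw [← h1]
        field_simp
        ring
      · simp only [Complex.add_im, Complex.real_smul, Complex.mul_im,
          Complex.ofReal_re, Complex.ofReal_im, Complex.one_re, Complex.one_im]
        rw [← h2]
        field_simp
        ring
    have hPmem : ∀ p : Fin m × Fin m, P p ∈
        {d : Fin m → ℂ |
          (∃ i : Fin m, d = fun j => if j = i then (1 : ℂ) else 0) ∨
          (∃ j k : Fin m, j ≠ k ∧ d = fun l =>
            if l = j then (⟨1/2, t / 2⟩ : ℂ)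
            else if l = k then (⟨1/2, -(t / 2)⟩ : ℂ) else 0)} := by
      rintro ⟨j, k⟩
      by_cases h : j = k
      · left
        exact ⟨j, by funext l; simp [hPdef, h]⟩
      · right
        exact ⟨j, k, h, by funext l; simp only [hPdef]; rw [if_neg h]⟩
    have hfinal := Finset.centerMass_mem_convexHull (Finset.univ) (fun p _ => hWnn p)
      (by rw [hsumW]; exact one_pos) (fun p _ => hPmem p)
    rwa [Finset.centerMass_eq_of_sum_1 _ _ hsumW, hrec] at hfinal
  · apply convexHull_min
    · rintro d hd
      rcases hd with ⟨i, rfl⟩ | ⟨j, k, hjk, rfl⟩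
      · refine ⟨fun l => ?_, ?_⟩
        · by_cases h : l = i <;> simp [h, (show 0 ≤ Real.tan α₀ from ht.le)]
        · simp [Finset.sum_ite_eq']
      · refine ⟨fun l => ?_, ?_⟩
        · by_cases h1 : l = j
          · simp only [if_pos h1]
            refine ⟨by norm_num, ?_⟩
            show |t/2| ≤ Real.tan α₀ * (1/2)
            rw [abs_of_nonneg (by linarith), ← htdef]
            linarith
          · by_cases h2 : l = k
            · simp only [if_neg h1, if_pos h2]
              refine ⟨by norm_num, ?_⟩
              show |(-(t/2))| ≤ Real.tan α₀ * (1/2)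
              rw [abs_neg, abs_of_nonneg (by linarith), ← htdef]
              linarith
            · simp [if_neg h1, if_neg h2]
        · have hsplit : ∀ l, (if l = j then (⟨1/2, t/2⟩:ℂ)
              else if l = k then (⟨1/2, -(t/2)⟩:ℂ) else 0)
              = (if l = j then (⟨1/2, t/2⟩:ℂ) else 0)
                + (if l = k then (⟨1/2, -(t/2)⟩:ℂ) else 0) := by
            intro l
            by_cases h1 : l = j
            · subst h1; simp [hjk]
            · by_cases h2 : l = k
              · subst h2; simp [Ne.symm hjk, h1]
              · simp [h1, h2]
          rw [Finset.sum_congr rfl (fun l _ => hsplit l), Finset.sum_add_distrib]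
          simp only [Finset.sum_ite_eq', Finset.mem_univ, if_pos]
          apply Complex.ext <;> norm_num
    · intro u hu v hv a b ha hb hab
      refine ⟨fun i => ?_, ?_⟩
      · have h1 := hu.1 i
        have h2 := hv.1 i
        have hre : ((a • u + b • v) i).re = a * (u i).re + b * (v i).re := by
          simp [Complex.real_smul, Complex.mul_re]
        have him : ((a • u + b • v) i).im = a * (u i).im + b * (v i).im := by
          simp [Complex.real_smul, Complex.mul_im]
        constructor
        · rw [hre]
          exact add_nonneg (mul_nonneg ha h1.1) (mul_nonneg hb h2.1)
        · rw [hre, him]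
          calc |a * (u i).im + b * (v i).im| ≤ |a * (u i).im| + |b * (v i).im| :=
                abs_add_le _ _
            _ = a * |(u i).im| + b * |(v i).im| := by
                rw [abs_mul, abs_mul, abs_of_nonneg ha, abs_of_nonneg hb]
            _ ≤ a * (t * (u i).re) + b * (t * (v i).re) :=
                add_le_add (mul_le_mul_of_nonneg_left h1.2 ha)
                  (mul_le_mul_of_nonneg_left h2.2 hb)
            _ = t * (a * (u i).re + b * (v i).re) := by ring
      · have : ∑ i, (a • u + b • v) i = (a:ℂ) * ∑ i, u i + (b:ℂ) * ∑ i, v i := by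
          simp [Finset.sum_add_distrib, Finset.mul_sum, Complex.real_smul]
        rw [this, hu.2, hv.2, mul_one, mul_one]
        exact_mod_cast congrArg (Complex.ofReal) hab |>.trans Complex.ofReal_one
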